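/- With the construction below, the ideal A_0 of finitely supported elements is contained in the subalgebra B, i.e., A_0 ⊆ B. -/

import Mathlib

open Matrix

/-- The `n×n` cyclic permutation matrix: identity block `I_{n-1}` in the upper right and
a `1` in the lower-left corner. -/
def cycMat (F : Type*) [Semiring F] (n : ℕ) : Matrix (Fin n) (Fin n) F :=
  Matrix.of fun k l => if (l : ℕ) = ((k : ℕ) + 1) % n then 1 else 0

/-- The matrix unit `E₁₁`, with `1` in the upper-left entry and zeros elsewhere. -/
def e11 (F : Type*) [Semiring F] (n : ℕ) : Matrix (Fin n) (Fin n) F :=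
  Matrix.of fun k l => if (k : ℕ) = 0 ∧ (l : ℕ) = 0 then 1 else 0

/-- Index set: pairs `(n, i)` with `n ≥ 2` and `1 ≤ i ≤ a n` (here `0`-indexed: `i < a n`).
Note that `n` lies in the support `S` of `a` automatically, since `i < a n` forces `a n ≠ 0`. -/
abbrev Idx (a : ℕ → ℕ) : Type := {p : ℕ × ℕ // 2 ≤ p.1 ∧ p.2 < a p.1}

/-- The ambient algebra `A = ∏_{n ∈ S} ∏_{i=1}^{a n} M_n(F)`. -/
abbrev ConstrA (F : Type*) [Field F] (a : ℕ → ℕ) : Type _ :=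
  ∀ p : Idx a, Matrix (Fin p.1.1) (Fin p.1.1) F

/-- The element `e` whose `(n,i)` component is `λ_{n,i} • E₁₁`. -/
def elemE {F : Type*} [Field F] (a : ℕ → ℕ) (lam : Idx a → F) : ConstrA F a :=
  fun p => lam p • e11 F p.1.1

/-- The element `σ` whose `(n,i)` component is the cyclic permutation matrix `P_n`. -/
def elemS (F : Type*) [Field F] (a : ℕ → ℕ) : ConstrA F a :=
  fun p => cycMat F p.1.1

section AuxMatrix

variable {F : Type*} [Field F] {n : ℕ}

lemma cycMat_pow (k : ℕ) :
    cycMat F n ^ k = Matrix.of fun i j : Fin n => if (j : ℕ) = ((i : ℕ) + k) % n then (1:F) else 0 := by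
  induction k with
  | zero =>
    ext i j
    simp only [pow_zero, Matrix.of_apply, Nat.add_zero, Nat.mod_eq_of_lt i.isLt]
    rw [Matrix.one_apply]
    simp [Fin.ext_iff, eq_comm]
  | succ k ih =>
    ext i j
    rw [pow_succ, ih, Matrix.mul_apply]
    have hn : 0 < n := i.pos
    rw [Finset.sum_eq_single (⟨((i : ℕ) + k) % n, Nat.mod_lt _ hn⟩ : Fin n)]
    · simp only [Matrix.of_apply, cycMat, if_pos rfl, one_mul]
      rw [Nat.mod_add_mod]
      simp [Nat.add_assoc]
    · intro b _ hb
      have : (b : ℕ) ≠ ((i : ℕ) + k) % n := by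
        intro h; exact hb (Fin.ext h)
      simp [Matrix.of_apply, this]
    · intro h; exact absurd (Finset.mem_univ _) h

lemma e11_mul_mul (hn : 0 < n) (M : Matrix (Fin n) (Fin n) F) :
    e11 F n * M * e11 F n = M ⟨0, hn⟩ ⟨0, hn⟩ • e11 F n := by
  ext i j
  rw [Matrix.mul_apply]
  rw [Finset.sum_eq_single (⟨0, hn⟩ : Fin n)]
  · rw [Matrix.mul_apply, Finset.sum_eq_single (⟨0, hn⟩ : Fin n)]
    · by_cases hi : (i : ℕ) = 0 <;> by_cases hj : (j : ℕ) = 0 <;>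
        simp [e11, hi, hj] <;> try ring
    · intro b _ hb
      have : (b : ℕ) ≠ 0 := fun h => hb (Fin.ext h)
      simp [e11, this]
    · intro h; exact absurd (Finset.mem_univ _) h
  · intro b _ hb
    have : (b : ℕ) ≠ 0 := fun h => hb (Fin.ext h)
    simp [e11, this]
  · intro h; exact absurd (Finset.mem_univ _) h

/-- row 0 and column 0 vanish off the corner -/
def Gd (M : Matrix (Fin n) (Fin n) F) : Prop :=
  ∀ i j : Fin n, (i : ℕ) ≠ (j : ℕ) → ((i : ℕ) = 0 ∨ (j : ℕ) = 0) → M i j = 0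

lemma Gd_one : Gd (1 : Matrix (Fin n) (Fin n) F) := by
  intro i j hij _
  exact Matrix.one_apply_ne (fun h => hij (congrArg Fin.val h))

lemma Gd_e11 : Gd (e11 F n) := by
  intro i j hij h
  simp only [e11, Matrix.of_apply, ite_eq_right_iff, and_imp]
  intro h1 h2; omega

lemma Gd_smul {M : Matrix (Fin n) (Fin n) F} (h : Gd M) (c : F) : Gd (c • M) := by
  intro i j hij hz; simp [h i j hij hz]

lemma Gd_sub {M N : Matrix (Fin n) (Fin n) F} (hM : Gd M) (hN : Gd N) : Gd (M - N) := by
  intro i j hij hz; simp [hM i j hij hz, hN i j hij hz]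

lemma Gd_mul {M N : Matrix (Fin n) (Fin n) F} (hM : Gd M) (hN : Gd N) : Gd (M * N) := by
  intro i j hij hz
  rw [Matrix.mul_apply]
  apply Finset.sum_eq_zero
  intro k _
  rcases hz with hz | hz
  · by_cases hk : (k : ℕ) = 0
    · rcases Nat.eq_zero_or_pos (j : ℕ) with h | h
      · omega
      · rw [hN k j (by omega) (Or.inl hk), mul_zero]
    · rw [hM i k (by omega) (Or.inl hz), zero_mul]
  · by_cases hk : (k : ℕ) = 0
    · rw [hM i k (by omega) (Or.inr hk), zero_mul]
    · rw [hN k j (by omega) (Or.inr hz), mul_zero]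

lemma Gd_mul00 (hn : 0 < n) {M N : Matrix (Fin n) (Fin n) F} (hN : Gd N) :
    (M * N) ⟨0, hn⟩ ⟨0, hn⟩ = M ⟨0, hn⟩ ⟨0, hn⟩ * N ⟨0, hn⟩ ⟨0, hn⟩ := by
  rw [Matrix.mul_apply]
  rw [Finset.sum_eq_single (⟨0, hn⟩ : Fin n)]
  · intro b _ hb
    have hb' : (b : ℕ) ≠ 0 := fun h => hb (Fin.ext h)
    rw [hN b ⟨0, hn⟩ hb' (Or.inr rfl), mul_zero]
  · intro h; exact absurd (Finset.mem_univ _) h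

lemma Gd_mul_smul_e11 (hn : 0 < n) {M : Matrix (Fin n) (Fin n) F} (hM : Gd M) (c : F) :
    M * (c • e11 F n) = (M ⟨0, hn⟩ ⟨0, hn⟩ * c) • e11 F n := by
  ext i j
  rw [Matrix.mul_apply, Finset.sum_eq_single (⟨0, hn⟩ : Fin n)]
  · by_cases hi : (i : ℕ) = 0 <;> by_cases hj : (j : ℕ) = 0
    · have : i = (⟨0, hn⟩ : Fin n) := Fin.ext hi
      subst this
      simp [e11, hj]
      try ring
    · simp [e11, hj]
    · have hM0 := hM i ⟨0, hn⟩ (by simpa using hi) (Or.inr rfl)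
      simp [e11, hM0, hi, hj]
    · simp [e11, hj]
  · intro b _ hb
    have : (b : ℕ) ≠ 0 := fun h => hb (Fin.ext h)
    simp [e11, this]
  · intro h; exact absurd (Finset.mem_univ _) h

lemma mul_e11_apply (hn : 0 < n) (M : Matrix (Fin n) (Fin n) F) (i' l : Fin n) :
    (M * e11 F n) i' l = if (l : ℕ) = 0 then M i' ⟨0, hn⟩ else 0 := by
  rw [Matrix.mul_apply, Finset.sum_eq_single (⟨0, hn⟩ : Fin n)]
  · by_cases hl : (l : ℕ) = 0 <;> simp [e11, hl]
  · intro b _ hb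
    have : (b : ℕ) ≠ 0 := fun h => hb (Fin.ext h)
    simp [e11, this]
  · intro h; exact absurd (Finset.mem_univ _) h

lemma cyc_e11_cyc (i j : Fin n) :
    cycMat F n ^ (n - (i : ℕ)) * e11 F n * cycMat F n ^ (j : ℕ) = single i j 1 := by
  have hn : 0 < n := i.pos
  have c1 : ∀ i' : Fin n, ((0:ℕ) = ((i' : ℕ) + (n - (i : ℕ))) % n) ↔ i' = i := by
    intro i'
    constructor
    · intro h
      obtain ⟨c, hc⟩ := Nat.dvd_of_mod_eq_zero h.symm
      have h1 : (i' : ℕ) + (n - (i : ℕ)) < 2 * n := by have := i'.isLt; omega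
      have h2 : 0 < (i' : ℕ) + (n - (i : ℕ)) := by have := i.isLt; omega
      have hc1 : c = 1 := by
        have hne : c ≠ 0 := by intro h0; rw [h0, Nat.mul_zero] at hc; omega
        have hlt : n * c < n * 2 := by omega
        have := Nat.lt_of_mul_lt_mul_left hlt
        omega
      rw [hc1, mul_one] at hc
      have := i.isLt; have := i'.isLt
      exact Fin.ext (by omega)
    · intro h; rw [h, Nat.add_sub_cancel' (le_of_lt i.isLt), Nat.mod_self]
  ext i' j'
  rw [Matrix.mul_apply, Finset.sum_eq_single (⟨0, hn⟩ : Fin n)]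
  · rw [mul_e11_apply hn]
    simp only [if_pos rfl]
    rw [cycMat_pow, cycMat_pow]
    simp only [Matrix.of_apply]
    by_cases h1 : i' = i <;> by_cases h2 : j' = j <;>
      simp [single, c1 i', h1, h2, Nat.mod_eq_of_lt j.isLt, Fin.val_inj,
        eq_comm (a := i), eq_comm (a := j)]
  · intro b _ hb
    have hb' : (b : ℕ) ≠ 0 := fun h => hb (Fin.ext h)
    rw [mul_e11_apply hn, if_neg hb', zero_mul]
  · intro h; exact absurd (Finset.mem_univ _) h

end AuxMatrix

section AuxPi

variable {F : Type*} [Field F] {a : ℕ → ℕ}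

/-- The element `e σ^k e`. -/
def sE (a : ℕ → ℕ) (lam : Idx a → F) (k : ℕ) : ConstrA F a :=
  elemE a lam * (elemS F a) ^ k * elemE a lam

lemma idx_pos (p : Idx a) : 0 < p.1.1 := by have := p.2.1; omega

/-- entry (0,0) of the `p`-component. -/
def vv (p : Idx a) (b : ConstrA F a) : F :=
  b p ⟨0, idx_pos p⟩ ⟨0, idx_pos p⟩

lemma sE_apply (lam : Idx a → F) (k : ℕ) (p : Idx a) :
    sE a lam k p = (if p.1.1 ∣ k then lam p ^ 2 else 0) • e11 F p.1.1 := by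
  have hp : 0 < p.1.1 := idx_pos p
  show (lam p • e11 F p.1.1) * (elemS F a ^ k) p * (lam p • e11 F p.1.1) = _
  rw [Pi.pow_apply]
  show (lam p • e11 F p.1.1) * cycMat F p.1.1 ^ k * (lam p • e11 F p.1.1) = _
  rw [Matrix.smul_mul, Matrix.smul_mul, Matrix.mul_smul, smul_smul, e11_mul_mul hp]
  rw [cycMat_pow]
  simp only [Matrix.of_apply, smul_smul]
  congr 1
  have hmod : ((0:ℕ) = (0 + k) % p.1.1) ↔ p.1.1 ∣ k := by
    rw [Nat.zero_add]
    constructor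
    · intro h; exact Nat.dvd_of_mod_eq_zero h.symm
    · intro h; rw [Nat.mod_eq_zero_of_dvd h]
  by_cases hd : p.1.1 ∣ k
  · rw [if_pos hd, if_pos (hmod.mpr hd)]
    ring
  · rw [if_neg hd, if_neg (fun h => hd (hmod.mp h))]
    ring

lemma vv_elemE (lam : Idx a → F) (p : Idx a) : vv p (elemE a lam) = lam p := by
  simp [vv, elemE, e11]

lemma vv_sE (lam : Idx a → F) (k : ℕ) (p : Idx a) :
    vv p (sE a lam k) = if p.1.1 ∣ k then lam p ^ 2 else 0 := by
  rw [vv, sE_apply]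
  simp [e11]

lemma vv_aff (p : Idx a) (b : ConstrA F a) (r s : F) :
    vv p (r • (b - s • 1)) = r * (vv p b - s) := by
  simp only [vv, Pi.smul_apply, Pi.sub_apply, Pi.one_apply, Matrix.smul_apply,
    Matrix.sub_apply, Matrix.one_apply_eq, smul_eq_mul, mul_one]

lemma vv_aff2 (p : Idx a) (b : ConstrA F a) (r s : F) :
    vv p (r • (s • 1 - b)) = r * (s - vv p b) := by
  simp only [vv, Pi.smul_apply, Pi.sub_apply, Pi.one_apply, Matrix.smul_apply,
    Matrix.sub_apply, Matrix.one_apply_eq, smul_eq_mul, mul_one]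

lemma Gd_elemE (lam : Idx a → F) (p : Idx a) : Gd (elemE a lam p) :=
  Gd_smul Gd_e11 _

lemma Gd_sE (lam : Idx a → F) (k : ℕ) (p : Idx a) : Gd (sE a lam k p) := by
  rw [sE_apply]; exact Gd_smul Gd_e11 _

/-- The separating element attached to index `q` (relative to the base point `p₀`). -/
def tq (a : ℕ → ℕ) (lam : Idx a → F) (p₀ q : Idx a) : ConstrA F a :=
  if q.1.1 = p₀.1.1 then (lam p₀ - lam q)⁻¹ • (elemE a lam - lam q • 1)
  else (lam q ^ 2)⁻¹ • ((lam q ^ 2) • 1 - sE a lam q.1.1)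

lemma Gd_tq (lam : Idx a → F) (p₀ q p : Idx a) : Gd (tq a lam p₀ q p) := by
  rw [tq]
  split_ifs
  · show Gd ((_ : F) • (elemE a lam p - lam q • (1 : Matrix _ _ F)))
    exact Gd_smul (Gd_sub (Gd_elemE lam p) (Gd_smul Gd_one _)) _
  · show Gd ((_ : F) • ((lam q ^ 2) • (1 : Matrix _ _ F) - sE a lam q.1.1 p))
    exact Gd_smul (Gd_sub (Gd_smul Gd_one _) (Gd_sE lam q.1.1 p)) _

lemma Gd_list_prod (l : List (ConstrA F a)) (h : ∀ y ∈ l, ∀ p, Gd (y p)) (p : Idx a) :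
    Gd (l.prod p) := by
  induction l with
  | nil =>
    show Gd ((1 : ConstrA F a) p)
    exact Gd_one
  | cons hd tl ih =>
    rw [List.prod_cons]
    show Gd (hd p * tl.prod p)
    exact Gd_mul (h hd (List.mem_cons_self) p)
      (ih (fun y hy => h y (List.mem_cons_of_mem _ hy)) )

lemma vv_list_prod (l : List (ConstrA F a)) (h : ∀ y ∈ l, ∀ p, Gd (y p)) (p : Idx a) :
    vv p l.prod = (l.map (vv p)).prod := by
  induction l with
  | nil =>
    show vv p 1 = 1
    simp [vv, Matrix.one_apply_eq]
  | cons hd tl ih =>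
    rw [List.prod_cons, List.map_cons, List.prod_cons]
    have htl : ∀ y ∈ tl, ∀ p, Gd (y p) := fun y hy => h y (List.mem_cons_of_mem _ hy)
    rw [← ih htl]
    show (hd p * tl.prod p) _ _ = _
    rw [Gd_mul00 (idx_pos p) (Gd_list_prod tl htl p)]
    rfl

end AuxPi

section KeyLemma

variable {F : Type*} [Field F] {a : ℕ → ℕ}

lemma key_e11 (lam : Idx a → F) (hlam_ne : ∀ p, lam p ≠ 0)
    (hlam : ∀ p q : Idx a, p.1.1 = q.1.1 → p ≠ q → lam p ≠ lam q ∧ lam p ≠ -lam q)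
    (p₀ : Idx a) :
    Function.update (0 : ConstrA F a) p₀ (e11 F p₀.1.1) ∈
      Algebra.adjoin F {elemE a lam, elemS F a} := by
  set B := Algebra.adjoin F {elemE a lam, elemS F a} with hB
  have hE : elemE a lam ∈ B := Algebra.subset_adjoin (Set.mem_insert _ _)
  have hS : elemS F a ∈ B := Algebra.subset_adjoin (Set.mem_insert_of_mem _ rfl)
  have hsE_mem : ∀ k, sE a lam k ∈ B := fun k => mul_mem (mul_mem hE (pow_mem hS k)) hE
  have htq_mem : ∀ q, tq a lam p₀ q ∈ B := by
    intro q
    rw [tq]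
    split_ifs
    · exact Subalgebra.smul_mem _ (sub_mem hE (Subalgebra.smul_mem _ (one_mem _) _)) _
    · exact Subalgebra.smul_mem _ (sub_mem (Subalgebra.smul_mem _ (one_mem _) _) (hsE_mem _)) _
  have hn₀ : 0 < p₀.1.1 := idx_pos p₀
  -- finiteness of the divisor set
  have hDfin : {q : Idx a | q.1.1 ∣ p₀.1.1}.Finite := by
    have h1 : (↑((Finset.range (p₀.1.1 + 1)) ×ˢ
        (Finset.range ((Finset.range (p₀.1.1 + 1)).sup a + 1))) : Set (ℕ × ℕ)).Finite :=
      Finset.finite_toSet _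
    apply Set.Finite.subset (h1.preimage (Subtype.val_injective.injOn))
    intro q hq
    simp only [Set.mem_preimage, Finset.coe_product, Set.mem_prod, Finset.mem_coe,
      Finset.mem_range]
    have hq1 : q.1.1 < p₀.1.1 + 1 := Nat.lt_succ_of_le (Nat.le_of_dvd hn₀ hq)
    refine ⟨hq1, ?_⟩
    have h2 : a q.1.1 ≤ (Finset.range (p₀.1.1 + 1)).sup a :=
      Finset.le_sup (Finset.mem_range.mpr hq1)
    have h3 := q.2.2
    omega
  classical
  set Dfin := hDfin.toFinset with hDfindef
  set l := ((Dfin.erase p₀).toList.map (tq a lam p₀)) with hldef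
  have hGdl : ∀ y ∈ l, ∀ p, Gd (y p) := by
    intro y hy p
    obtain ⟨q, _, rfl⟩ := List.mem_map.mp hy
    exact Gd_tq lam p₀ q p
  have hvv_tq₀ : ∀ q ∈ Dfin.erase p₀, vv p₀ (tq a lam p₀ q) = 1 := by
    intro q hq
    obtain ⟨hqne, hqD⟩ := Finset.mem_erase.mp hq
    have hdvd : q.1.1 ∣ p₀.1.1 := hDfin.mem_toFinset.mp hqD
    rw [tq]
    by_cases hc : q.1.1 = p₀.1.1
    · rw [if_pos hc, vv_aff, vv_elemE]
      exact inv_mul_cancel₀ (sub_ne_zero.mpr (hlam p₀ q hc.symm (Ne.symm hqne)).1)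
    · rw [if_neg hc, vv_aff2, vv_sE]
      have hnd : ¬ p₀.1.1 ∣ q.1.1 := fun h => hc (Nat.dvd_antisymm hdvd h)
      rw [if_neg hnd, sub_zero]
      exact inv_mul_cancel₀ (pow_ne_zero 2 (hlam_ne q))
  have hvv_tqq : ∀ q ∈ Dfin.erase p₀, vv q (tq a lam p₀ q) = 0 := by
    intro q hq
    rw [tq]
    by_cases hc : q.1.1 = p₀.1.1
    · rw [if_pos hc, vv_aff, vv_elemE, sub_self, mul_zero]
    · rw [if_neg hc, vv_aff2, vv_sE, if_pos (dvd_refl _), sub_self, mul_zero]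
  set c := l.prod with hcdef
  have hcB : c ∈ B := by
    apply Subalgebra.list_prod_mem
    intro y hy
    obtain ⟨q, _, rfl⟩ := List.mem_map.mp hy
    exact htq_mem q
  have hcGd : ∀ p, Gd (c p) := Gd_list_prod l hGdl
  have hvvc₀ : vv p₀ c = 1 := by
    rw [hcdef, vv_list_prod l hGdl]
    apply List.prod_eq_one
    intro fx hfx
    rw [hldef, List.map_map] at hfx
    obtain ⟨q, hq, rfl⟩ := List.mem_map.mp hfx
    exact hvv_tq₀ q (Finset.mem_toList.mp hq)
  have hvvcq : ∀ q ∈ Dfin.erase p₀, vv q c = 0 := by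
    intro q hq
    rw [hcdef, vv_list_prod l hGdl]
    apply List.prod_eq_zero
    rw [hldef, List.map_map]
    exact List.mem_map.mpr ⟨q, Finset.mem_toList.mpr hq, hvv_tqq q hq⟩
  have hcomp : ∀ p : Idx a, (c * sE a lam p₀.1.1) p
      = (vv p c * (if p.1.1 ∣ p₀.1.1 then lam p ^ 2 else 0)) • e11 F p.1.1 := by
    intro p
    show c p * sE a lam p₀.1.1 p = _
    rw [sE_apply, Gd_mul_smul_e11 (idx_pos p) (hcGd p)]
    rfl
  have hupdate : Function.update (0 : ConstrA F a) p₀ (e11 F p₀.1.1)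
      = (lam p₀ ^ 2)⁻¹ • (c * sE a lam p₀.1.1) := by
    funext p
    by_cases hp : p = p₀
    · subst hp
      rw [Function.update_self, Pi.smul_apply, hcomp p, hvvc₀, if_pos (dvd_refl _), one_mul,
        smul_smul, inv_mul_cancel₀ (pow_ne_zero 2 (hlam_ne p)), one_smul]
    · rw [Function.update_of_ne hp, Pi.smul_apply, hcomp p]
      by_cases hdvd : p.1.1 ∣ p₀.1.1
      · have hpD : p ∈ Dfin.erase p₀ :=
          Finset.mem_erase.mpr ⟨hp, hDfin.mem_toFinset.mpr hdvd⟩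
        rw [hvvcq p hpD, zero_mul, zero_smul, smul_zero]
        rfl
      · rw [if_neg hdvd, mul_zero, zero_smul, smul_zero]
        rfl
  rw [hupdate]
  exact Subalgebra.smul_mem _ (mul_mem hcB (hsE_mem _)) _

lemma key (lam : Idx a → F) (hlam_ne : ∀ p, lam p ≠ 0)
    (hlam : ∀ p q : Idx a, p.1.1 = q.1.1 → p ≠ q → lam p ≠ lam q ∧ lam p ≠ -lam q)
    (p₀ : Idx a) (m : Matrix (Fin p₀.1.1) (Fin p₀.1.1) F) :
    Function.update (0 : ConstrA F a) p₀ m ∈ Algebra.adjoin F {elemE a lam, elemS F a} := by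
  classical
  set B := Algebra.adjoin F {elemE a lam, elemS F a} with hB
  have hS : elemS F a ∈ B := Algebra.subset_adjoin (Set.mem_insert_of_mem _ rfl)
  have hstd : ∀ i j : Fin p₀.1.1,
      Function.update (0 : ConstrA F a) p₀ (single i j (1:F)) ∈ B := by
    intro i j
    have heq : Function.update (0 : ConstrA F a) p₀ (single i j (1:F))
        = elemS F a ^ (p₀.1.1 - (i : ℕ)) * Function.update (0 : ConstrA F a) p₀ (e11 F p₀.1.1)
            * elemS F a ^ ((j : ℕ)) := by
      funext p
      by_cases hp : p = p₀
      · subst hp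
        show _ = (elemS F a ^ (p.1.1 - (i : ℕ))) p * _ * (elemS F a ^ ((j : ℕ))) p
        rw [Function.update_self, Function.update_self, Pi.pow_apply, Pi.pow_apply]
        show single i j (1:F)
            = cycMat F p.1.1 ^ (p.1.1 - (i : ℕ)) * e11 F p.1.1 * cycMat F p.1.1 ^ ((j : ℕ))
        exact (cyc_e11_cyc i j).symm
      · rw [Function.update_of_ne hp]
        show (0 : Matrix _ _ F) = (elemS F a ^ (p₀.1.1 - (i : ℕ))) p
            * (Function.update (0 : ConstrA F a) p₀ (e11 F p₀.1.1)) p * (elemS F a ^ ((j : ℕ))) p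
        rw [Function.update_of_ne hp]
        show (0 : Matrix _ _ F) = _ * (0 : Matrix _ _ F) * _
        rw [mul_zero, zero_mul]
    rw [heq]
    exact mul_mem (mul_mem (pow_mem hS _) (key_e11 lam hlam_ne hlam p₀)) (pow_mem hS _)
  have hdecomp : Function.update (0 : ConstrA F a) p₀ m
      = ∑ i : Fin p₀.1.1, ∑ j : Fin p₀.1.1,
          m i j • Function.update (0 : ConstrA F a) p₀ (single i j (1:F)) := by
    funext p
    rw [Finset.sum_apply]
    by_cases hp : p = p₀
    · subst hp
      simp only [Finset.sum_apply, Pi.smul_apply, Function.update_self]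
      simp only [smul_single, smul_eq_mul, mul_one]
      exact matrix_eq_sum_single m
    · simp only [Finset.sum_apply, Pi.smul_apply, Function.update_of_ne hp]
      simp
  rw [hdecomp]
  exact sum_mem (fun i _ => sum_mem (fun j _ =>
    Subalgebra.smul_mem _ (hstd i j) _))

end KeyLemma


/-- **Lemma (A₀ ⊆ B).** With `B = F⟨e,σ⟩ ⊆ A`, every finitely supported element of `A`
lies in `B`; i.e. the ideal `A₀ = ⨁_{n ∈ S} A_n` of elements with only finitely many
nonzero components is contained in `B`. -/
theorem stmt_1 (F : Type*) [Field F] [IsAlgClosed F] (a : ℕ → ℕ) (lam : Idx a → F)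
    (hlam_ne : ∀ p, lam p ≠ 0)
    (hlam : ∀ p q : Idx a, p.1.1 = q.1.1 → p ≠ q → lam p ≠ lam q ∧ lam p ≠ -lam q)
    (x : ConstrA F a) (hx : {p : Idx a | x p ≠ 0}.Finite) :
    x ∈ Algebra.adjoin F {elemE a lam, elemS F a} := by
  classical
  have hxsum : x = ∑ p ∈ hx.toFinset, Function.update (0 : ConstrA F a) p (x p) := by
    funext q
    rw [Finset.sum_apply]
    by_cases hq : q ∈ hx.toFinset
    · rw [Finset.sum_eq_single q]
      · rw [Function.update_self]
      · intro p _ hpq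
        rw [Function.update_of_ne (Ne.symm hpq)]
        rfl
      · intro h; exact absurd hq h
    · have hq0 : x q = 0 := by
        have := (Set.Finite.mem_toFinset hx).not.mp hq
        simpa using this
      rw [hq0]
      symm
      apply Finset.sum_eq_zero
      intro p hp
      have hpq : q ≠ p := by
        intro h; subst h; exact hq hp
      rw [Function.update_of_ne hpq]
      rfl
  rw [hxsum]
  exact sum_mem (fun p _ => key lam hlam_ne hlam p (x p))
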